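/- Let V and W be vector spaces over a field F with dim V = n, dim W = k ≤ n, and let U_1,...,U_m be subspaces of V with dim U_i = r_i. If |F| > (n-k)(m+1), then there exists a linear map φ : V → W such that dim(φ(U_i)) = min(r_i, k) for all i. -/

import Mathlib

open Module Submodule Pointwise

/-- A vector space over a field `F` is not the union of fewer than `|F|` proper subspaces. -/
lemma exists_notMem_of_card_lt' {F E : Type*} [Field F] [AddCommGroup E] [Module F E]
    (s : Finset (Submodule F E)) (hs : ∀ p ∈ s, p ≠ ⊤)
    (hcard : (s.card : Cardinal) < Cardinal.mk F) :
    ∃ v : E, ∀ p ∈ s, v ∉ p := by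
  by_contra h
  push_neg at h
  have hcovers : ⋃ p ∈ s, (p : Set E) = Set.univ := by
    ext v
    simp only [Set.mem_iUnion, Set.mem_univ, iff_true]
    obtain ⟨p, hp, hv⟩ := h v
    exact ⟨p, hp, hv⟩
  have hcovers' : ⋃ p ∈ s, (0 : E) +ᵥ (p.toAddSubgroup : Set E) = Set.univ := by
    simpa only [zero_vadd, Submodule.coe_toAddSubgroup] using hcovers
  obtain ⟨p, hp, hfi, hle⟩ := AddSubgroup.exists_index_le_card_of_leftCoset_cover hcovers'
  haveI : (p.toAddSubgroup).FiniteIndex := hfi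
  haveI : Finite (E ⧸ p) := AddSubgroup.finite_quotient_of_finiteIndex
  haveI : Nontrivial (E ⧸ p) :=
    Submodule.Quotient.nontrivial_iff.mpr (hs p hp)
  obtain ⟨x, hx⟩ := exists_ne (0 : E ⧸ p)
  have hinj : Function.Injective (fun c : F => c • x) := smul_left_injective F hx
  haveI : Finite F := Finite.of_injective _ hinj
  have h2 : Nat.card F ≤ Nat.card (E ⧸ p) := Nat.card_le_card_of_injective _ hinj
  have h3 : p.toAddSubgroup.index = Nat.card (E ⧸ p) := AddSubgroup.index_eq_card _
  have h4 : (Nat.card F : Cardinal) = Cardinal.mk F := by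
    exact Nat.cast_card
  have h5 : (s.card : ℕ) < Nat.card F := by
    have := hcard.trans_eq h4.symm
    exact_mod_cast this
  omega

/-- Inductive construction of a subspace of dimension `j` in general position
with respect to the subspaces `U i`. -/
lemma exists_generic_subspace {F V : Type*} [Field F] [AddCommGroup V] [Module F V]
    [FiniteDimensional F V] (n k m : ℕ) (hV : Module.finrank F V = n) (hkn : k ≤ n)
    (U : Fin m → Submodule F V) (r : Fin m → ℕ)
    (hU : ∀ i, Module.finrank F ↥(U i) = r i)
    (hF : ((n - k) * (m + 1) : ℕ) < Cardinal.mk F) :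
    ∀ j, j ≤ n - k → ∃ K : Submodule F V, Module.finrank F ↥K = j ∧
      ∀ i, Module.finrank F ↥(K ⊓ U i) ≤ r i + j - n := by
  intro j
  induction j with
  | zero =>
    intro _
    refine ⟨⊥, finrank_bot F V, fun i => ?_⟩
    rw [bot_inf_eq, finrank_bot]
    exact Nat.zero_le _
  | succ j ih =>
    intro hj
    obtain ⟨K, hK, hKU⟩ := ih (le_trans (Nat.le_succ j) hj)
    classical
    set s : Finset (Submodule F V) :=
      insert K ((Finset.univ.filter
        (fun i => r i + (j + 1) - n ≤ Module.finrank F ↥(K ⊓ U i))).image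
        (fun i => K ⊔ U i)) with hs_def
    -- every member of s is proper
    have hjn : j < n := by omega
    have hproper : ∀ p ∈ s, p ≠ ⊤ := by
      intro p hp
      rw [hs_def, Finset.mem_insert] at hp
      rcases hp with rfl | hp
      · intro htop
        rw [htop, finrank_top, hV] at hK
        omega
      · obtain ⟨i, hi, rfl⟩ := Finset.mem_image.mp hp
        rw [Finset.mem_filter] at hi
        have hcap := hi.2
        have heq := Submodule.finrank_sup_add_finrank_inf_eq K (U i)
        rw [hK, hU i] at heq
        intro htop
        rw [htop, finrank_top, hV] at heq
        omega
    -- s is small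
    have hcard : (s.card : Cardinal) < Cardinal.mk F := by
      have h1 : s.card ≤ m + 1 := by
        rw [hs_def]
        refine (Finset.card_insert_le _ _).trans (Nat.add_le_add_right ?_ 1)
        refine Finset.card_image_le.trans ((Finset.card_filter_le _ _).trans ?_)
        simp
      have h2 : m + 1 ≤ (n - k) * (m + 1) := Nat.le_mul_of_pos_left _ (by omega)
      have h3 : (s.card : Cardinal) ≤ (((n - k) * (m + 1) : ℕ) : Cardinal) := by
        exact_mod_cast Nat.cast_le.mpr (h1.trans h2)
      exact h3.trans_lt hF
    obtain ⟨v, hv⟩ := exists_notMem_of_card_lt' s hproper hcard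
    have hvK : v ∉ K := hv K (Finset.mem_insert_self _ _)
    have hv0 : v ≠ 0 := fun h => hvK (h ▸ K.zero_mem)
    -- K ⊓ span v = ⊥
    have hKv : K ⊓ (F ∙ v) = ⊥ := by
      rw [eq_bot_iff]
      rintro x ⟨hxK, hxv⟩
      obtain ⟨c, rfl⟩ := Submodule.mem_span_singleton.mp hxv
      rcases eq_or_ne c 0 with rfl | hc
      · simp
      · exact absurd (by simpa [smul_smul, inv_mul_cancel₀ hc] using K.smul_mem c⁻¹ hxK) hvK
    have hK' : Module.finrank F ↥(K ⊔ (F ∙ v)) = j + 1 := by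
      have heq := Submodule.finrank_sup_add_finrank_inf_eq K (F ∙ v)
      rw [hK, hKv, finrank_span_singleton hv0, finrank_bot] at heq
      omega
    refine ⟨K ⊔ (F ∙ v), hK', fun i => ?_⟩
    by_cases hcap : r i + (j + 1) - n ≤ Module.finrank F ↥(K ⊓ U i)
    · -- constrained case: intersection does not grow
      have hvKU : v ∉ K ⊔ U i := by
        apply hv
        rw [hs_def]
        refine Finset.mem_insert_of_mem (Finset.mem_image.mpr ⟨i, ?_, rfl⟩)
        exact Finset.mem_filter.mpr ⟨Finset.mem_univ i, hcap⟩
      have heq : (K ⊔ (F ∙ v)) ⊓ U i = K ⊓ U i := by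
        refine le_antisymm ?_ (inf_le_inf_right _ le_sup_left)
        rintro x ⟨hxs, hxU⟩
        obtain ⟨y, hy, z, hz, rfl⟩ := Submodule.mem_sup.mp hxs
        obtain ⟨c, rfl⟩ := Submodule.mem_span_singleton.mp hz
        rcases eq_or_ne c 0 with rfl | hc
        · simpa using ⟨hy, by simpa using hxU⟩
        · exfalso
          apply hvKU
          have h1 : y + c • v - y ∈ K ⊔ U i :=
            Submodule.sub_mem _ (Submodule.mem_sup_right hxU) (Submodule.mem_sup_left hy)
          have h2 : c⁻¹ • (y + c • v - y) ∈ K ⊔ U i := Submodule.smul_mem _ _ h1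
          simpa [smul_smul, inv_mul_cancel₀ hc] using h2
      rw [heq]
      have := hKU i
      omega
    · -- unconstrained case: intersection grows by at most one
      push_neg at hcap
      have h1 : ((K ⊔ (F ∙ v)) ⊓ U i) ⊓ K = K ⊓ U i := by
        rw [inf_comm, ← inf_assoc, inf_eq_left.mpr (le_sup_left : K ≤ K ⊔ (F ∙ v))]
      have h2 : ((K ⊔ (F ∙ v)) ⊓ U i) ⊔ K ≤ K ⊔ (F ∙ v) :=
        sup_le inf_le_left le_sup_left
      have heq := Submodule.finrank_sup_add_finrank_inf_eq ((K ⊔ (F ∙ v)) ⊓ U i) K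
      rw [h1, hK] at heq
      have h3 := Submodule.finrank_mono h2
      rw [hK'] at h3
      have h4 := hKU i
      omega

theorem general_position_exists (F : Type*) [Field F]
    {V W : Type*} [AddCommGroup V] [Module F V] [AddCommGroup W] [Module F W]
    [FiniteDimensional F V] [FiniteDimensional F W]
    (n k m : ℕ) (hV : Module.finrank F V = n) (hW : Module.finrank F W = k)
    (hkn : k ≤ n) (U : Fin m → Submodule F V) (r : Fin m → ℕ)
    (hU : ∀ i, Module.finrank F ↥(U i) = r i)
    (hF : ((n - k) * (m + 1) : ℕ) < Cardinal.mk F) :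
    ∃ φ : V →ₗ[F] W, ∀ i, Module.finrank F ↥((U i).map φ) = min (r i) k := by
  obtain ⟨K, hK, hKU⟩ := exists_generic_subspace n k m hV hkn U r hU hF (n - k) le_rfl
  -- the quotient V ⧸ K has dimension k
  have hq : Module.finrank F (V ⧸ K) = k := by
    have := Submodule.finrank_quotient_add_finrank K
    rw [hK, hV] at this
    omega
  obtain ⟨e⟩ := FiniteDimensional.nonempty_linearEquiv_of_finrank_eq (hq.trans hW.symm)
  refine ⟨e.toLinearMap ∘ₗ K.mkQ, fun i => ?_⟩
  have hker : LinearMap.ker (e.toLinearMap ∘ₗ K.mkQ) = K := by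
    rw [LinearMap.ker_comp, LinearEquiv.ker, Submodule.comap_bot, Submodule.ker_mkQ]
  set φ := e.toLinearMap ∘ₗ K.mkQ with hφ
  set f := φ ∘ₗ (U i).subtype with hf
  have hrange : LinearMap.range f = (U i).map φ := by
    rw [hf, LinearMap.range_comp, Submodule.range_subtype]
  have hkerf : LinearMap.ker f = Submodule.comap (U i).subtype K := by
    rw [hf, LinearMap.ker_comp, hker]
  have hkerdim : Module.finrank F ↥(LinearMap.ker f) = Module.finrank F ↥(K ⊓ U i) := by
    rw [hkerf]
    rw [(Submodule.equivMapOfInjective (U i).subtype (Submodule.injective_subtype _)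
      (Submodule.comap (U i).subtype K)).finrank_eq, Submodule.map_comap_subtype, inf_comm]
  have hrn := LinearMap.finrank_range_add_finrank_ker f
  rw [hrange, hkerdim] at hrn
  have hUi : Module.finrank F ↥(U i) = r i := hU i
  rw [hUi] at hrn
  have hle : Module.finrank F ↥((U i).map φ) ≤ k := by
    rw [← hW]
    exact Submodule.finrank_le _
  have hbound := hKU i
  have hri : r i ≤ n := by
    rw [← hUi, ← hV]
    exact Submodule.finrank_le _
  omega
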